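/- Let Γ be a finite additive abelian group and S a multiset of elements of Γ, with Cayley sum adjacency matrix A_S (a real symmetric matrix). Then there exists a multiset L of nonnegative real numbers such that the multiset of eigenvalues of A_S (roots of its characteristic polynomial, with multiplicity) equals M + L + (−L), where M is the multiset {χ(S) : χ a real-valued additive character of Γ} and −L = {−λ : λ ∈ L}. -/

import Mathlib

open Polynomial Matrix Finset in
lemma pairing_charpoly {ι : Type*} [Fintype ι] [DecidableEq ι]
    (σ : ι → ι) (hσ : ∀ i, σ (σ i) = i) (d : ι → ℂ)
    (hd : ∀ i, d (σ i) = starRingEnd ℂ (d i)) :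
    ∃ L : Multiset ℝ, (∀ x ∈ L, 0 ≤ x) ∧
      (Matrix.of fun i j : ι => if i = σ j then d j else 0).charpoly
        = ((((Finset.univ.filter (fun i => σ i = i)).val.map (fun i => (d i).re))
            + L + L.map (fun x : ℝ => -x)).map
            (fun r : ℝ => X - C (r : ℂ))).prod := by
  classical
  set p : ι → Prop := fun i => σ i = i with hp
  set B : Matrix ι ι ℂ := Matrix.of fun i j : ι => if i = σ j then d j else 0 with hB
  -- the nonfixed part
  have hnf : ∀ i : {i // ¬ p i}, ¬ p (σ (i : ι)) := by
    rintro ⟨i, hi⟩ h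
    exact hi (by simpa [p, hσ i] using h.symm)
  let σ' : {i // ¬ p i} → {i // ¬ p i} := fun i => ⟨σ i, hnf i⟩
  have hσ' : ∀ i, σ' (σ' i) = i := fun i => Subtype.ext (hσ i)
  have hne : ∀ i, σ' i ≠ i := by
    rintro ⟨i, hi⟩ h
    exact hi (congrArg Subtype.val h)
  -- setoid pairing i with σ' i
  let s : Setoid {i // ¬ p i} :=
    ⟨fun a b => a = b ∨ a = σ' b, by
      constructor
      · exact fun a => Or.inl rfl
      · rintro a b (rfl | rfl)
        · exact Or.inl rfl
        · exact Or.inr (hσ' _).symm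
      · rintro a b c (rfl | rfl) (h | h)
        · exact Or.inl h
        · exact Or.inr h
        · exact Or.inr (by rw [h])
        · exact Or.inl (by rw [h, hσ'])⟩
  let T := Quotient s
  haveI : Fintype T := Fintype.ofFinite _
  let gg : Bool × T → {i // ¬ p i} := fun bt => if bt.1 then bt.2.out else σ' bt.2.out
  have hmk : ∀ i : {i // ¬ p i}, (Quotient.mk s i).out = i ∨ (Quotient.mk s i).out = σ' i :=
    fun i => Quotient.mk_out (s := s) i
  have hmkσ : ∀ i, (Quotient.mk s (σ' i)) = Quotient.mk s i :=
    fun i => Quotient.sound (Or.inr rfl)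
  let e₁ : {i // ¬ p i} ≃ Bool × T :=
  { toFun := fun i => (decide ((Quotient.mk s i).out = i), Quotient.mk s i)
    invFun := gg
    left_inv := by
      intro i
      rcases hmk i with h | h
      · simp [gg, h]
      · have h2 : ¬ ((Quotient.mk s i).out = i) := by rw [h]; exact hne i
        simp [gg, h2, h, hσ']
    right_inv := by
      rintro ⟨b, t⟩
      cases b
      · have h1 : Quotient.mk s (σ' t.out) = t := by rw [hmkσ, Quotient.out_eq]
        have h2 : ¬ ((Quotient.mk s (σ' t.out)).out = σ' t.out) := by
          rw [h1]; exact fun h => hne t.out h.symm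
        simp only [gg, Bool.false_eq_true, if_false, Prod.mk.injEq]
        exact ⟨by simp [h2], h1⟩
      · simp only [gg, if_true, Prod.mk.injEq]
        exact ⟨by simp [Quotient.out_eq], Quotient.out_eq t⟩ }
  let e : ({i // p i} ⊕ (Bool × T)) ≃ ι :=
    (Equiv.sumCongr (Equiv.refl {i // p i}) e₁.symm).trans (Equiv.sumCompl p)
  have he_inl : ∀ a : {i // p i}, e (Sum.inl a) = (a : ι) := fun a => rfl
  have he_inr : ∀ bt : Bool × T, e (Sum.inr bt) = ((gg bt : {i // ¬ p i}) : ι) := fun bt => rfl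
  have hggσ : ∀ b t, σ ((gg (b, t) : {i // ¬ p i}) : ι) = ((gg (!b, t) : {i // ¬ p i}) : ι) := by
    intro b t
    cases b <;> simp [gg, σ', hσ]
  have hgg_inj : Function.Injective gg := e₁.symm.injective
  let rr : T → ℝ := fun t => ‖d (t.out : ι)‖
  let Mt : T → Matrix Bool Bool ℂ := fun t =>
    Matrix.of fun b b' => if b = !b' then d ((gg (b', t) : {i // ¬ p i}) : ι) else 0
  have hblock : reindex e.symm e.symm B =
      Matrix.fromBlocks (Matrix.diagonal fun a : {i // p i} => d (a : ι)) 0 0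
        (Matrix.blockDiagonal Mt) := by
    ext x y
    match x, y with
    | Sum.inl a, Sum.inl c =>
      simp only [reindex_apply, submatrix_apply, Equiv.symm_symm, he_inl, hB, Matrix.of_apply,
        fromBlocks_apply₁₁]
      rw [show σ (c : ι) = (c : ι) from c.2]
      by_cases h : a = c
      · subst h; simp [Matrix.diagonal_apply_eq]
      · rw [if_neg (fun hh => h (Subtype.ext hh)), Matrix.diagonal_apply_ne _ h]
    | Sum.inl a, Sum.inr bt =>
      simp only [reindex_apply, submatrix_apply, Equiv.symm_symm, he_inl, he_inr, hB,
        Matrix.of_apply, fromBlocks_apply₁₂, Matrix.zero_apply]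
      rw [if_neg]
      intro h
      rcases bt with ⟨b, t⟩
      rw [hggσ] at h
      exact (gg (!b, t)).2 (h ▸ a.2)
    | Sum.inr bt, Sum.inl c =>
      simp only [reindex_apply, submatrix_apply, Equiv.symm_symm, he_inl, he_inr, hB,
        Matrix.of_apply, fromBlocks_apply₂₁, Matrix.zero_apply]
      rw [if_neg]
      intro h
      rw [show σ (c : ι) = (c : ι) from c.2] at h
      exact (gg bt).2 (h ▸ c.2)
    | Sum.inr ⟨b, t⟩, Sum.inr ⟨b', t'⟩ =>
      simp only [reindex_apply, submatrix_apply, Equiv.symm_symm, he_inr, hB,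
        Matrix.of_apply, fromBlocks_apply₂₂, Matrix.blockDiagonal_apply]
      rw [hggσ]
      by_cases ht : t = t'
      · subst ht
        rw [if_pos rfl]
        by_cases hb : b = !b'
        · subst hb
          rw [if_pos rfl]
          simp [Mt]
        · rw [if_neg]
          · simp [Mt, hb]
          · intro h
            exact hb (congrArg Prod.fst (hgg_inj (Subtype.coe_injective h)))
      · rw [if_neg, if_neg ht]
        intro h
        exact ht (congrArg Prod.snd (hgg_inj (Subtype.coe_injective h)))
  have hcp : B.charpoly = (Matrix.diagonal fun a : {i // p i} => d (a : ι)).charpoly *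
      (Matrix.blockDiagonal Mt).charpoly := by
    rw [← Matrix.charpoly_reindex e.symm B, hblock, Matrix.charpoly_fromBlocks_zero₁₂]
  have hdiag : (Matrix.diagonal fun a : {i // p i} => d (a : ι)).charpoly
      = ∏ a : {i // p i}, (X - C (d (a : ι))) := by
    have hcm : charmatrix (Matrix.diagonal fun a : {i // p i} => d (a : ι))
        = Matrix.diagonal fun a : {i // p i} => (X : ℂ[X]) - C (d (a : ι)) := by
      ext i j
      by_cases h : i = j
      · subst h; simp
      · simp [charmatrix_apply_ne _ _ _ h, Matrix.diagonal_apply_ne _ h]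
    rw [Matrix.charpoly, hcm, Matrix.det_diagonal]
  have hbd : (Matrix.blockDiagonal Mt).charpoly = ∏ t : T, (Mt t).charpoly := by
    have hcm : charmatrix (Matrix.blockDiagonal Mt)
        = Matrix.blockDiagonal fun t => charmatrix (Mt t) := by
      ext x y : 2
      obtain ⟨i, k⟩ := x
      obtain ⟨j, k'⟩ := y
      simp only [charmatrix_apply, Matrix.blockDiagonal_apply, Matrix.diagonal_apply,
        Prod.mk.injEq]
      by_cases hk : k = k' <;> by_cases hi : i = j <;> simp [hk, hi]
    rw [Matrix.charpoly, hcm, Matrix.det_blockDiagonal]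
    rfl
  have h2 : ∀ t : T, (Mt t).charpoly = (X - C ((rr t : ℝ) : ℂ)) * (X + C ((rr t : ℝ) : ℂ)) := by
    intro t
    rw [← Matrix.charpoly_reindex finTwoEquiv.symm (Mt t)]
    have e00 : (reindex finTwoEquiv.symm finTwoEquiv.symm (Mt t)) 0 0 = 0 := by
      simp [Mt, finTwoEquiv]
    have e11 : (reindex finTwoEquiv.symm finTwoEquiv.symm (Mt t)) 1 1 = 0 := by
      simp [Mt, finTwoEquiv]
    have e01 : (reindex finTwoEquiv.symm finTwoEquiv.symm (Mt t)) 0 1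
        = d ((t.out : {i // ¬ p i}) : ι) := by
      simp [Mt, finTwoEquiv, gg]
    have e10 : (reindex finTwoEquiv.symm finTwoEquiv.symm (Mt t)) 1 0
        = starRingEnd ℂ (d ((t.out : {i // ¬ p i}) : ι)) := by
      have h1 : (reindex finTwoEquiv.symm finTwoEquiv.symm (Mt t)) 1 0
          = d ((σ' t.out : {i // ¬ p i}) : ι) := by
        simp [Mt, finTwoEquiv, gg]
      rw [h1, show ((σ' t.out : {i // ¬ p i}) : ι) = σ ((t.out : {i // ¬ p i}) : ι) from rfl, hd]
    rw [Matrix.charpoly, Matrix.det_fin_two, charmatrix_apply_eq, charmatrix_apply_eq,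
      charmatrix_apply_ne _ _ _ (by decide), charmatrix_apply_ne _ _ _ (by decide),
      e00, e11, e01, e10, map_zero]
    have hx : (C (d ((t.out : {i // ¬ p i}) : ι)) *
        C (starRingEnd ℂ (d ((t.out : {i // ¬ p i}) : ι))) : ℂ[X])
        = C (((rr t : ℝ) : ℂ))^2 := by
      rw [← C_mul, ← C_pow]
      congr 1
      rw [Complex.mul_conj]
      rw [show ((rr t : ℝ) : ℂ)^2 = (((rr t)^2 : ℝ) : ℂ) by push_cast; ring]
      congr 1
      exact (Complex.sq_norm _).symm
    linear_combination -hx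
  refine ⟨Multiset.map rr (Finset.univ : Finset T).val, ?_, ?_⟩
  · intro x hx
    obtain ⟨t, _, rfl⟩ := Multiset.mem_map.1 hx
    exact norm_nonneg _
  · rw [hcp, hdiag, hbd, Multiset.map_add, Multiset.map_add, Multiset.prod_add,
      Multiset.prod_add, Multiset.map_map, Multiset.map_map]
    have hM : (Multiset.map ((fun r : ℝ => X - C (r : ℂ)) ∘ fun i => (d i).re)
          (Finset.univ.filter fun i : ι => σ i = i).val).prod
        = ∏ a : {i // p i}, (X - C (d (a : ι))) := by
      rw [← Finset.prod_eq_multiset_prod]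
      rw [Finset.prod_subtype (p := p) (Finset.univ.filter fun i : ι => σ i = i)
        (fun x => by simp [hp]) ((fun r : ℝ => X - C (r : ℂ)) ∘ fun i => (d i).re)]
      refine Finset.prod_congr rfl fun a _ => ?_
      have hre : ((d (a : ι)).re : ℂ) = d (a : ι) := by
        refine Complex.conj_eq_iff_re.mp ?_
        conv_lhs => rw [← hd]
        rw [show σ (a : ι) = (a : ι) from a.2]
      simp only [Function.comp_apply, hre]
    have hL1 : (Multiset.map ((fun r : ℝ => X - C (r : ℂ)) ∘ rr)
          (Finset.univ : Finset T).val).prod = ∏ t : T, (X - C ((rr t : ℝ) : ℂ)) := by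
      rw [← Finset.prod_eq_multiset_prod]
      rfl
    have hL2 : (Multiset.map (((fun r : ℝ => X - C (r : ℂ)) ∘ fun x : ℝ => -x) ∘ rr)
          (Finset.univ : Finset T).val).prod = ∏ t : T, (X + C ((rr t : ℝ) : ℂ)) := by
      rw [← Finset.prod_eq_multiset_prod]
      refine Finset.prod_congr rfl fun t _ => ?_
      simp only [Function.comp_apply]
      rw [Complex.ofReal_neg, map_neg, sub_neg_eq_add]
    rw [Multiset.map_map, Multiset.map_map, hM, hL1, hL2]
    rw [Finset.prod_congr rfl fun t _ => h2 t, Finset.prod_mul_distrib]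
    ring

open Polynomial Matrix in
lemma my_charpoly_conj {n R : Type*} [Fintype n] [DecidableEq n] [CommRing R]
    (P A : Matrix n n R) [Invertible P] :
    (⅟P * A * P).charpoly = A.charpoly := by
  have h1 : (⅟P).map (C : R →+* R[X]) * P.map C = 1 := by
    rw [← Matrix.map_mul, invOf_mul_self, Matrix.map_one _ (map_zero _) (map_one _)]
  have h2 : P.map (C : R →+* R[X]) * (⅟P).map C = 1 := by
    rw [← Matrix.map_mul, mul_invOf_self, Matrix.map_one _ (map_zero _) (map_one _)]
  have hc : charmatrix (⅟P * A * P) =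
      (⅟P).map (C : R →+* R[X]) * charmatrix A * P.map C := by
    unfold charmatrix
    simp only [RingHom.mapMatrix_apply]
    rw [Matrix.map_mul (f := (C : R →+* R[X])), Matrix.map_mul (f := (C : R →+* R[X])),
      mul_sub, sub_mul]
    congr 1
    rw [mul_assoc, (Matrix.scalar_commute (X : R[X]) (Commute.all _) _).eq, ← mul_assoc, h1,
      one_mul]
  rw [Matrix.charpoly, Matrix.charpoly, hc, det_mul, det_mul, mul_comm, ← mul_assoc,
    ← det_mul, h2, det_one, one_mul]

lemma sum_count_mul {Γ : Type*} [Fintype Γ] [DecidableEq Γ] (S : Multiset Γ) (f : Γ → ℂ) :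
    ∑ a : Γ, (S.count a : ℂ) * f a = (S.map f).sum := by
  induction S using Multiset.induction_on with
  | empty => simp
  | cons a0 S ih =>
    have h : ∀ a : Γ, ((a0 ::ₘ S).count a : ℂ) * f a
        = (S.count a : ℂ) * f a + (if a = a0 then f a else 0) := by
      intro a
      rw [Multiset.count_cons]
      push_cast
      split_ifs <;> ring
    rw [Finset.sum_congr rfl fun a _ => h a, Finset.sum_add_distrib, ih,
      Finset.sum_ite_eq' Finset.univ a0 f, if_pos (Finset.mem_univ _), Multiset.map_cons,
      Multiset.sum_cons]
    ring

open scoped Classical in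
/-- For a finite additive abelian group `Γ` and a multiset `S` of elements
of `Γ` with real Cayley sum adjacency matrix `A_S(u,v) = m_S(u+v)`, there is a multiset
`L` of nonnegative reals such that the multiset of eigenvalues of `A_S` (roots of its
characteristic polynomial with multiplicity) is `M + L + (−L)`, where `M` is the
multiset of the (real) values `χ(S)` over all real-valued additive characters `χ`. -/
theorem cayley_sum_spectrum_nearly_symmetric
    {Γ : Type*} [AddCommGroup Γ] [Fintype Γ] [DecidableEq Γ]
    (S : Multiset Γ) :
    ∃ L : Multiset ℝ, (∀ x ∈ L, 0 ≤ x) ∧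
      (Matrix.charpoly (Matrix.of fun u v : Γ => (S.count (u + v) : ℝ))).roots
        = ((Finset.univ.filter
              (fun χ : AddChar Γ ℂ => ∀ a : Γ, (χ a).im = 0)).val.map
              (fun χ => ((S.map ⇑χ).sum).re))
          + L + L.map (fun x => -x) := by
  classical
  letI : DecidableEq (AddChar Γ ℂ) := Classical.decEq _
  set A : Matrix Γ Γ ℝ := Matrix.of fun u v : Γ => (S.count (u + v) : ℝ) with hA
  let c : AddChar Γ ℂ → ℂ := fun χ => (S.map ⇑χ).sum
  have hcard : Fintype.card (AddChar Γ ℂ) = Fintype.card Γ := AddChar.card_eq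
  let g : Γ ≃ AddChar Γ ℂ := (Fintype.equivOfCardEq hcard).symm
  let Ac : Matrix Γ Γ ℂ := A.map Complex.ofRealHom
  let P : Matrix Γ Γ ℂ := Matrix.of fun u v => g v u
  let Q : Matrix Γ Γ ℂ := Matrix.of fun u v => (starRingEnd ℂ) (g u v)
  -- orthogonality
  have hQP : Q * P = (Fintype.card Γ : ℂ) • (1 : Matrix Γ Γ ℂ) := by
    ext u v
    have hterm : ∀ w, (starRingEnd ℂ) (g u w) * (g v) w = (g v - g u) w := by
      intro w
      rw [AddChar.sub_apply, AddChar.map_neg_eq_conj]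
      ring
    rw [Matrix.mul_apply]
    simp only [Q, P, Matrix.of_apply]
    rw [Finset.sum_congr rfl fun w _ => hterm w, AddChar.sum_eq_ite]
    rw [Matrix.smul_apply, Matrix.one_apply]
    by_cases h : u = v
    · subst h
      simp [sub_self]
    · rw [if_neg (fun hh => h (g.injective (by rwa [sub_eq_zero] at hh)).symm),
        if_neg h, smul_eq_mul, mul_zero]
  have hcΓ : (Fintype.card Γ : ℂ) ≠ 0 := Nat.cast_ne_zero.mpr Fintype.card_ne_zero
  haveI : Invertible P :=
    invertibleOfLeftInverse P ((Fintype.card Γ : ℂ)⁻¹ • Q) (by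
      rw [Matrix.smul_mul, hQP, smul_smul, inv_mul_cancel₀ hcΓ, one_smul])
  -- the action of Ac on characters
  have claim1 : ∀ (χ : AddChar Γ ℂ) (u : Γ),
      ∑ w, (S.count (u + w) : ℂ) * χ w = χ⁻¹ u * c χ := by
    intro χ u
    rw [Fintype.sum_equiv (Equiv.addLeft u) (fun w => (S.count (u + w) : ℂ) * χ w)
      (fun s => (S.count s : ℂ) * ((χ (-u)) * χ s)) (fun w => by
        simp only [Equiv.coe_addLeft, neg_add_cancel_left]
        rw [← AddChar.map_add_eq_mul, neg_add_cancel_left])]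
    have : ∑ s, (S.count s : ℂ) * (χ (-u) * χ s)
        = χ (-u) * ∑ s, (S.count s : ℂ) * χ s := by
      rw [Finset.mul_sum]
      exact Finset.sum_congr rfl fun s _ => by ring
    rw [this, sum_count_mul, AddChar.inv_apply]
  let B : Matrix Γ Γ ℂ := Matrix.of fun u v => if g u = (g v)⁻¹ then c (g v) else 0
  have hAP : Ac * P = P * B := by
    ext u v
    rw [Matrix.mul_apply, Matrix.mul_apply]
    simp only [Ac, P, B, A, Matrix.map_apply, Matrix.of_apply, Complex.ofRealHom_eq_coe,
      Complex.ofReal_natCast]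
    rw [claim1 (g v) u]
    have : ∀ w, (g w) u * (if g w = (g v)⁻¹ then c (g v) else 0)
        = if w = g.symm ((g v)⁻¹) then (g w) u * c (g v) else 0 := by
      intro w
      rw [mul_ite, mul_zero]
      simp only [Equiv.eq_symm_apply]
    rw [Finset.sum_congr rfl fun w _ => this w,
      Finset.sum_ite_eq' Finset.univ (g.symm ((g v)⁻¹)) (fun w => (g w) u * c (g v)),
      if_pos (Finset.mem_univ _), Equiv.apply_symm_apply]
  have hBAc : B = ⅟P * Ac * P := by
    rw [mul_assoc, hAP, ← mul_assoc, invOf_mul_self, one_mul]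
  have hchB : B.charpoly = Ac.charpoly := by
    rw [hBAc, my_charpoly_conj]
  -- reindex to characters
  let B2 : Matrix (AddChar Γ ℂ) (AddChar Γ ℂ) ℂ :=
    Matrix.of fun ψ χ => if ψ = (fun χ : AddChar Γ ℂ => χ⁻¹) χ then c χ else 0
  have hB2 : B = Matrix.reindex g.symm g.symm B2 := by
    ext u v
    simp [B, B2, Matrix.reindex_apply]
  have hchB2 : B2.charpoly = Ac.charpoly := by
    rw [← hchB, hB2, Matrix.charpoly_reindex]
  -- apply the pairing lemma
  have hd : ∀ χ : AddChar Γ ℂ, c ((fun χ : AddChar Γ ℂ => χ⁻¹) χ) = (starRingEnd ℂ) (c χ) := by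
    intro χ
    simp only [c]
    rw [map_multiset_sum, Multiset.map_map]
    congr 1
    refine Multiset.map_congr rfl fun s _ => ?_
    rw [Function.comp_apply, AddChar.inv_apply, AddChar.map_neg_eq_conj]
  obtain ⟨L, hL0, hLfac⟩ := pairing_charpoly (fun χ : AddChar Γ ℂ => χ⁻¹)
    (fun χ => inv_inv χ) c hd
  refine ⟨L, hL0, ?_⟩
  -- identify the fixed characters with the real-valued ones
  have hfilter : (Finset.univ.filter (fun χ : AddChar Γ ℂ => χ⁻¹ = χ))
      = (Finset.univ.filter (fun χ : AddChar Γ ℂ => ∀ a : Γ, (χ a).im = 0)) := by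
    refine Finset.filter_congr fun χ _ => ?_
    constructor
    · intro h a
      have h' : χ⁻¹ = χ := h
      have : χ⁻¹ a = χ a := by rw [h']
      rw [AddChar.inv_apply, AddChar.map_neg_eq_conj] at this
      exact Complex.conj_eq_iff_im.mp this
    · intro h
      ext a
      rw [AddChar.inv_apply, AddChar.map_neg_eq_conj]
      exact Complex.conj_eq_iff_im.mpr (h a)
  set E : Multiset ℝ := ((Finset.univ.filter
      (fun χ : AddChar Γ ℂ => ∀ a : Γ, (χ a).im = 0)).val.map
      (fun χ => ((S.map ⇑χ).sum).re)) + L + L.map (fun x => -x) with hE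
  have hB2fac : B2.charpoly = (E.map (fun r : ℝ => Polynomial.X - Polynomial.C (r : ℂ))).prod := by
    rw [hLfac, hE, hfilter]
  -- back to the real characteristic polynomial
  have hmapped : (A.charpoly).map Complex.ofRealHom
      = ((E.map (fun r : ℝ => Polynomial.X - Polynomial.C r)).prod).map Complex.ofRealHom := by
    rw [← Matrix.charpoly_map A Complex.ofRealHom]
    show Ac.charpoly = _
    rw [← hchB2, hB2fac, Polynomial.map_multiset_prod, Multiset.map_map]
    congr 1
    refine Multiset.map_congr rfl fun r _ => ?_
    rw [Function.comp_apply, Polynomial.map_sub, Polynomial.map_X, Polynomial.map_C]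
    rfl
  have hreal : A.charpoly = (E.map (fun r : ℝ => Polynomial.X - Polynomial.C r)).prod :=
    Polynomial.map_injective Complex.ofRealHom Complex.ofReal_injective hmapped
  rw [hreal, Polynomial.roots_multiset_prod_X_sub_C]
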